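/- Let ((x1,x2), (ξ1,ξ2)) ∈ D and j ∈ {1,2}. Set r = (2 − x2)√(ξ1² + ξ2²)/|ξ2|, s = √(r² − 1), x0 = x1 + ξ1(2 − x2)/ξ2 + (−1)^{j−1}s, σ = ξ2/(2 − x2), τ1 = (−1)^{j−1}σ(x1 − x0), and τ2 = −σ((−1)^{j−1}s + x1 − x0). Then r > 1 (so s > 0), (x1,x2) ∈ C_j(s,x0), (ξ1,ξ2) = −σ((x1,x2) − c_j(s,x0)), and ((s, x0, τ1, τ2), ((x1,x2),(ξ1,ξ2))) is the unique element of 𝒞_j whose right projection is ((x1,x2),(ξ1,ξ2)). -/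

import Mathlib

/-- The canonical relation `𝒞_j ⊆ ℝ⁴ × (ℝ² × ℝ²)` of the circle transform `T_j`
(`j ∈ {1,2}`), for scanning region `X = {2 − r_m < x2 < 1}`:
all pairs `((s, x0, (−1)^{j−1}σ(x1−x0), −σ((−1)^{j−1}s + x1 − x0)),
((x1,x2), −σ((x1,x2) − c_j(s,x0))))` with `s > 0`, `σ ≠ 0` and
`(x1,x2) ∈ C_j(s,x0) ∩ X`, where `c_j(s,x0) = (x0 + (−1)^j s, 2)`. -/
def Crel (rm : ℝ) (j : ℕ) : Set ((ℝ × ℝ × ℝ × ℝ) × ((ℝ × ℝ) × (ℝ × ℝ))) :=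
  {p | ∃ s x0 σ x1 x2 : ℝ, 0 < s ∧ σ ≠ 0 ∧
    (x1 - (x0 + (-1 : ℝ) ^ j * s)) ^ 2 + (x2 - 2) ^ 2 = s ^ 2 + 1 ∧
    2 - rm < x2 ∧ x2 < 1 ∧
    p = ((s, x0, (-1 : ℝ) ^ (j - 1) * σ * (x1 - x0),
            -σ * ((-1 : ℝ) ^ (j - 1) * s + x1 - x0)),
         ((x1, x2), (-σ * (x1 - (x0 + (-1 : ℝ) ^ j * s)), -σ * (x2 - 2))))}

/-- The set `D = {((x1,x2),(ξ1,ξ2)) : 2 − r_m < x2 < 1, ξ2 ≠ 0}`. -/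
def Dset (rm : ℝ) : Set ((ℝ × ℝ) × (ℝ × ℝ)) :=
  {v | 2 - rm < v.1.2 ∧ v.1.2 < 1 ∧ v.2.2 ≠ 0}

/-- Explicit inverse of the right projection `π_R : 𝒞_j → D`.  For `((x1,x2),(ξ1,ξ2)) ∈ D`
and `j ∈ {1,2}`, with `r = (2−x2)√(ξ1²+ξ2²)/|ξ2|`, `s = √(r²−1)`,
`x0 = x1 + ξ1(2−x2)/ξ2 + (−1)^{j−1} s`, `σ = ξ2/(2−x2)`,
`τ1 = (−1)^{j−1}σ(x1−x0)`, `τ2 = −σ((−1)^{j−1}s + x1 − x0)`, one has `r > 1`,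
`(x1,x2) ∈ C_j(s,x0)`, `(ξ1,ξ2) = −σ((x1,x2) − c_j(s,x0))`, and
`((s,x0,τ1,τ2), ((x1,x2),(ξ1,ξ2)))` is the unique element of `𝒞_j` whose right
projection is `((x1,x2),(ξ1,ξ2))`. -/
theorem stmt6 (rm : ℝ) (hrm : 1 < rm) (j : ℕ) (hj : j ∈ ({1, 2} : Set ℕ))
    (x1 x2 ξ1 ξ2 : ℝ) (hD : (((x1, x2), (ξ1, ξ2)) : (ℝ × ℝ) × (ℝ × ℝ)) ∈ Dset rm)
    (r s x0 σ τ1 τ2 : ℝ)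
    (hr : r = (2 - x2) * Real.sqrt (ξ1 ^ 2 + ξ2 ^ 2) / |ξ2|)
    (hs : s = Real.sqrt (r ^ 2 - 1))
    (hx0 : x0 = x1 + ξ1 * (2 - x2) / ξ2 + (-1 : ℝ) ^ (j - 1) * s)
    (hσ : σ = ξ2 / (2 - x2))
    (hτ1 : τ1 = (-1 : ℝ) ^ (j - 1) * σ * (x1 - x0))
    (hτ2 : τ2 = -σ * ((-1 : ℝ) ^ (j - 1) * s + x1 - x0)) :
    1 < r ∧ 0 < s ∧
    (x1 - (x0 + (-1 : ℝ) ^ j * s)) ^ 2 + (x2 - 2) ^ 2 = s ^ 2 + 1 ∧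
    (ξ1, ξ2) = ((-σ * (x1 - (x0 + (-1 : ℝ) ^ j * s)), -σ * (x2 - 2)) : ℝ × ℝ) ∧
    (((s, x0, τ1, τ2), ((x1, x2), (ξ1, ξ2))) :
        (ℝ × ℝ × ℝ × ℝ) × ((ℝ × ℝ) × (ℝ × ℝ))) ∈ Crel rm j ∧
    ∀ q ∈ Crel rm j, q.2 = ((x1, x2), (ξ1, ξ2)) →
      q = ((s, x0, τ1, τ2), ((x1, x2), (ξ1, ξ2))) := by
  obtain ⟨h1, h2, hξ2⟩ := hD
  simp only at h1 h2 hξ2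
  have hjb : (-1 : ℝ) ^ (j - 1) = -((-1 : ℝ) ^ j) := by
    rcases hj with rfl | rfl <;> norm_num
  set a : ℝ := (-1 : ℝ) ^ j with hadef
  have h2x2 : (1:ℝ) < 2 - x2 := by linarith
  have h2x2' : (2 - x2) ≠ 0 := ne_of_gt (by linarith)
  have habs : 0 < |ξ2| := abs_pos.mpr hξ2
  have hsum0 : (0:ℝ) ≤ ξ1^2 + ξ2^2 := by positivity
  have hsumle : |ξ2| ≤ Real.sqrt (ξ1^2 + ξ2^2) := by
    rw [← Real.sqrt_sq_eq_abs]
    exact Real.sqrt_le_sqrt (by nlinarith)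
  have hr1 : 1 < r := by
    rw [hr, lt_div_iff₀ habs]
    nlinarith [hsumle, habs, h2x2]
  have hs2 : s ^ 2 = r ^ 2 - 1 := by
    rw [hs, Real.sq_sqrt (by nlinarith)]
  have hspos : 0 < s := by
    rw [hs]; exact Real.sqrt_pos.mpr (by nlinarith)
  have hσ0 : σ ≠ 0 := by
    rw [hσ]; exact div_ne_zero hξ2 h2x2'
  have hr2 : r ^ 2 = (2 - x2) ^ 2 * (ξ1 ^ 2 + ξ2 ^ 2) / ξ2 ^ 2 := by
    rw [hr, div_pow, mul_pow, Real.sq_sqrt hsum0, sq_abs]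
  have hx0' : x0 = x1 + ξ1 * (2 - x2) / ξ2 - a * s := by rw [hx0, hjb]; ring
  have hlin : x1 - (x0 + a * s) = -(ξ1 * (2 - x2) / ξ2) := by rw [hx0']; ring
  have hcirc : (x1 - (x0 + a * s)) ^ 2 + (x2 - 2) ^ 2 = s ^ 2 + 1 := by
    rw [hlin, hs2, hr2]
    field_simp
    ring
  have hξ1eq : ξ1 = -σ * (x1 - (x0 + a * s)) := by
    rw [hlin, hσ]; field_simp
  have hξ2eq : ξ2 = -σ * (x2 - 2) := by
    rw [hσ]; field_simp; ring
  refine ⟨hr1, hspos, hcirc, ?_, ?_, ?_⟩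
  · simp only [Prod.mk.injEq]; exact ⟨hξ1eq, hξ2eq⟩
  · refine ⟨s, x0, σ, x1, x2, hspos, hσ0, hcirc, h1, h2, ?_⟩
    rw [← hadef, ← hξ1eq, ← hξ2eq, ← hτ1, ← hτ2]
  · rintro q ⟨S, X0, Sg, X1, X2, hS, hSg, hC, hB1, hB2, rfl⟩ hq2
    rw [← hadef] at hC hq2 ⊢
    simp only [Prod.mk.injEq] at hq2
    obtain ⟨⟨rfl, rfl⟩, hη1, hη2⟩ := hq2
    have hSgσ : Sg = σ := by
      rw [hσ, ← hη2]
      field_simp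
      ring
    subst hSgσ
    have hlin' : X1 - (X0 + a * S) = -(ξ1 * (2 - X2) / ξ2) := by
      have h' : -Sg * (X1 - (X0 + a * S)) = -Sg * (-(ξ1 * (2 - X2) / ξ2)) := by
        rw [hη1, hσ]; field_simp
      exact mul_left_cancel₀ (neg_ne_zero.mpr hσ0) h'
    have hS2 : S ^ 2 = s ^ 2 := by
      rw [hlin'] at hC
      have h'' := hcirc
      rw [hlin] at h''
      linarith
    have hSs : S = s := by
      calc S = Real.sqrt (S ^ 2) := (Real.sqrt_sq hS.le).symm
        _ = Real.sqrt (s ^ 2) := by rw [hS2]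
        _ = s := Real.sqrt_sq hspos.le
    subst hSs
    have hX0 : X0 = x0 := by
      rw [hx0']
      linarith [hlin, hlin']
    subst hX0
    rw [hτ1, hτ2, hjb, hη1, hη2]
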